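/- The double cross product A ⋈ H is a bialgebra: with the tensor-product coalgebra structure on A ⊗ H, for all u, v ∈ A ⊗ H one has Δ_{A⊗H}(m_D(u ⊗ v)) = Σ m_D(u₁ ⊗ v₁) ⊗ m_D(u₂ ⊗ v₂), ε_{A⊗H}(m_D(u ⊗ v)) = ε_{A⊗H}(u)·ε_{A⊗H}(v), and Δ_{A⊗H}(1_A ⊗ 1_H) = (1_A ⊗ 1_H) ⊗ (1_A ⊗ 1_H). -/

import Mathlib

set_option synthInstance.maxHeartbeats 400000
set_option maxHeartbeats 1000000


open TensorProduct

noncomputable section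

universe u

variable {k A H X : Type u} [Field k]
  [Ring A] [Ring H] [Ring X]
  [Bialgebra k A] [Bialgebra k H] [Bialgebra k X]

/-- ζ : H ⊗ A → A ⊗ H, ζ(h ⊗ a) = ξ⁻¹(j_H(h) · j_A(a)). -/
def zetaF (jA : A →ₐc[k] X) (jH : H →ₐc[k] X) (ξ : (A ⊗[k] H) ≃ₗ[k] X) :
    H ⊗[k] A →ₗ[k] A ⊗[k] H :=
  ξ.symm.toLinearMap ∘ₗ LinearMap.mul' k X ∘ₗ
    TensorProduct.map (jH : H →ₗ[k] X) (jA : A →ₗ[k] X)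

/-- α := (id_A ⊗ ε_H) ∘ ζ. -/
def alphaF (jA : A →ₐc[k] X) (jH : H →ₐc[k] X) (ξ : (A ⊗[k] H) ≃ₗ[k] X) :
    H ⊗[k] A →ₗ[k] A :=
  (TensorProduct.rid k A).toLinearMap ∘ₗ
    TensorProduct.map LinearMap.id Coalgebra.counit ∘ₗ zetaF jA jH ξ

/-- β := (ε_A ⊗ id_H) ∘ ζ. -/
def betaF (jA : A →ₐc[k] X) (jH : H →ₐc[k] X) (ξ : (A ⊗[k] H) ≃ₗ[k] X) :
    H ⊗[k] A →ₗ[k] H :=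
  (TensorProduct.lid k H).toLinearMap ∘ₗ
    TensorProduct.map Coalgebra.counit LinearMap.id ∘ₗ zetaF jA jH ξ

/-- The map H ⊗ A → A ⊗ H, h ⊗ a ↦ Σ α(h₁ ⊗ a₁) ⊗ β(h₂ ⊗ a₂). -/
def zetaAB (jA : A →ₐc[k] X) (jH : H →ₐc[k] X) (ξ : (A ⊗[k] H) ≃ₗ[k] X) :
    H ⊗[k] A →ₗ[k] A ⊗[k] H :=
  TensorProduct.map (alphaF jA jH ξ) (betaF jA jH ξ) ∘ₗ
    (Coalgebra.comul : H ⊗[k] A →ₗ[k] (H ⊗[k] A) ⊗[k] (H ⊗[k] A))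

/-- The double cross product multiplication m_D on A ⊗ H:
m_D((a ⊗ h) ⊗ (a' ⊗ h')) = Σ a·α(h₁ ⊗ a'₁) ⊗ β(h₂ ⊗ a'₂)·h'. -/
def mD (jA : A →ₐc[k] X) (jH : H →ₐc[k] X) (ξ : (A ⊗[k] H) ≃ₗ[k] X) :
    (A ⊗[k] H) ⊗[k] (A ⊗[k] H) →ₗ[k] A ⊗[k] H :=
  TensorProduct.map (LinearMap.mul' k A) LinearMap.id ∘ₗ
  (TensorProduct.assoc k A A H).symm.toLinearMap ∘ₗ
  TensorProduct.map LinearMap.id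
    (TensorProduct.map LinearMap.id (LinearMap.mul' k H) ∘ₗ
     (TensorProduct.assoc k A H H).toLinearMap ∘ₗ
     TensorProduct.map (zetaAB jA jH ξ) LinearMap.id ∘ₗ
     (TensorProduct.assoc k H A H).symm.toLinearMap) ∘ₗ
  (TensorProduct.assoc k A H (A ⊗[k] H)).toLinearMap

theorem xi_comul (jA : A →ₐc[k] X) (jH : H →ₐc[k] X) (ξ : (A ⊗[k] H) ≃ₗ[k] X)
    (hξ : ∀ (a : A) (h : H), ξ (a ⊗ₜ[k] h) = jA a * jH h) (u : A ⊗[k] H) :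
    Coalgebra.comul (R := k) (ξ u)
      = TensorProduct.map ξ.toLinearMap ξ.toLinearMap (Coalgebra.comul u) := by
  have key : ∀ (p : A ⊗[k] A) (q : H ⊗[k] H),
      TensorProduct.map ξ.toLinearMap ξ.toLinearMap
        (TensorProduct.tensorTensorTensorComm k A A H H (p ⊗ₜ q))
      = (TensorProduct.map jA.toLinearMap jA.toLinearMap p)
        * (TensorProduct.map jH.toLinearMap jH.toLinearMap q) := by
    intro p q
    induction p using TensorProduct.induction_on with
    | zero =>
      simp only [zero_tmul, _root_.map_zero, zero_mul]
    | tmul a₁ a₂ =>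
      induction q using TensorProduct.induction_on with
      | zero => simp only [tmul_zero, _root_.map_zero, mul_zero]
      | tmul h₁ h₂ =>
        simp only [tensorTensorTensorComm_tmul, TensorProduct.map_tmul,
          Algebra.TensorProduct.tmul_mul_tmul, LinearEquiv.coe_coe,
          BialgHom.coe_toLinearMap, hξ]
        rfl
      | add q₁ q₂ hq₁ hq₂ =>
        simp only [tmul_add, _root_.map_add, mul_add, hq₁, hq₂]
    | add p₁ p₂ hp₁ hp₂ =>
      simp only [add_tmul, _root_.map_add, add_mul, hp₁, hp₂]
  induction u using TensorProduct.induction_on with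
  | zero => simp
  | tmul a h =>
    rw [hξ]
    simp only [TensorProduct.comul_tmul, TensorProduct.AlgebraTensorModule.tensorTensorTensorComm_eq, LinearMap.coe_comp,
      LinearEquiv.coe_coe, Function.comp_apply, TensorProduct.map_tmul]
    rw [Bialgebra.comul_mul, key]
    have hA' : TensorProduct.map jA.toLinearMap jA.toLinearMap ∘ₗ Coalgebra.comul
        = Coalgebra.comul ∘ₗ jA.toLinearMap := CoalgHomClass.map_comp_comul jA
    have hH' : TensorProduct.map jH.toLinearMap jH.toLinearMap ∘ₗ Coalgebra.comul
        = Coalgebra.comul ∘ₗ jH.toLinearMap := CoalgHomClass.map_comp_comul jH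
    have hA := LinearMap.congr_fun hA' a
    have hH := LinearMap.congr_fun hH' h
    simp only [LinearMap.coe_comp, Function.comp_apply] at hA hH
    have hA2 : (TensorProduct.map jA.toLinearMap jA.toLinearMap) (Coalgebra.comul a)
        = Coalgebra.comul (R := k) (jA a) := hA
    have hH2 : (TensorProduct.map jH.toLinearMap jH.toLinearMap) (Coalgebra.comul h)
        = Coalgebra.comul (R := k) (jH h) := hH
    rw [hA2, hH2]
  | add u₁ u₂ h₁ h₂ => simp [h₁, h₂]

theorem xi_counit (jA : A →ₐc[k] X) (jH : H →ₐc[k] X) (ξ : (A ⊗[k] H) ≃ₗ[k] X)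
    (hξ : ∀ (a : A) (h : H), ξ (a ⊗ₜ[k] h) = jA a * jH h) (u : A ⊗[k] H) :
    Coalgebra.counit (R := k) (ξ u) = Coalgebra.counit (R := k) u := by
  induction u using TensorProduct.induction_on with
  | zero => simp
  | tmul a h =>
    rw [hξ]
    have hA' : Coalgebra.counit ∘ₗ jA.toLinearMap = Coalgebra.counit :=
      CoalgHomClass.counit_comp jA
    have hH' : Coalgebra.counit ∘ₗ jH.toLinearMap = Coalgebra.counit :=
      CoalgHomClass.counit_comp jH
    have hA := LinearMap.congr_fun hA' a
    have hH := LinearMap.congr_fun hH' h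
    simp only [LinearMap.coe_comp, Function.comp_apply] at hA hH
    have hA2 : Coalgebra.counit (R := k) (jA a) = Coalgebra.counit a := hA
    have hH2 : Coalgebra.counit (R := k) (jH h) = Coalgebra.counit h := hH
    simp only [Bialgebra.counit_mul]
    rw [hA2, hH2]
    simp [TensorProduct.counit_tmul, mul_comm]
  | add u₁ u₂ h₁ h₂ => simp [h₁, h₂]

theorem map_symm_symm_map (ξ : (A ⊗[k] H) ≃ₗ[k] X) (w : (A ⊗[k] H) ⊗[k] (A ⊗[k] H)) :
    TensorProduct.map ξ.symm.toLinearMap ξ.symm.toLinearMap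
      (TensorProduct.map ξ.toLinearMap ξ.toLinearMap w) = w := by
  induction w using TensorProduct.induction_on with
  | zero => simp
  | tmul x y => simp
  | add x y hx hy => simp [hx, hy]

theorem xi_symm_comul (jA : A →ₐc[k] X) (jH : H →ₐc[k] X) (ξ : (A ⊗[k] H) ≃ₗ[k] X)
    (hξ : ∀ (a : A) (h : H), ξ (a ⊗ₜ[k] h) = jA a * jH h) (x : X) :
    Coalgebra.comul (R := k) (ξ.symm x)
      = TensorProduct.map ξ.symm.toLinearMap ξ.symm.toLinearMap (Coalgebra.comul x) := by
  have h := xi_comul jA jH ξ hξ (ξ.symm x)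
  rw [ξ.apply_symm_apply] at h
  rw [h, map_symm_symm_map]

theorem xi_symm_counit (jA : A →ₐc[k] X) (jH : H →ₐc[k] X) (ξ : (A ⊗[k] H) ≃ₗ[k] X)
    (hξ : ∀ (a : A) (h : H), ξ (a ⊗ₜ[k] h) = jA a * jH h) (x : X) :
    Coalgebra.counit (R := k) (ξ.symm x) = Coalgebra.counit (R := k) x := by
  have h := xi_counit jA jH ξ hξ (ξ.symm x)
  rw [ξ.apply_symm_apply] at h
  exact h.symm

theorem zetaF_apply (jA : A →ₐc[k] X) (jH : H →ₐc[k] X) (ξ : (A ⊗[k] H) ≃ₗ[k] X)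
    (h : H) (a : A) : zetaF jA jH ξ (h ⊗ₜ[k] a) = ξ.symm (jH h * jA a) := by
  simp [zetaF]

theorem xi_zetaF (jA : A →ₐc[k] X) (jH : H →ₐc[k] X) (ξ : (A ⊗[k] H) ≃ₗ[k] X)
    (h : H) (a : A) : ξ (zetaF jA jH ξ (h ⊗ₜ[k] a)) = jH h * jA a := by
  rw [zetaF_apply, ξ.apply_symm_apply]

theorem zeta_comul (jA : A →ₐc[k] X) (jH : H →ₐc[k] X) (ξ : (A ⊗[k] H) ≃ₗ[k] X)
    (hξ : ∀ (a : A) (h : H), ξ (a ⊗ₜ[k] h) = jA a * jH h) (t : H ⊗[k] A) :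
    Coalgebra.comul (R := k) (zetaF jA jH ξ t)
      = TensorProduct.map (zetaF jA jH ξ) (zetaF jA jH ξ) (Coalgebra.comul t) := by
  have key : ∀ (p : H ⊗[k] H) (q : A ⊗[k] A),
      TensorProduct.map (zetaF jA jH ξ) (zetaF jA jH ξ)
        (TensorProduct.tensorTensorTensorComm k H H A A (p ⊗ₜ q))
      = TensorProduct.map ξ.symm.toLinearMap ξ.symm.toLinearMap
          ((TensorProduct.map jH.toLinearMap jH.toLinearMap p)
            * (TensorProduct.map jA.toLinearMap jA.toLinearMap q)) := by
    intro p q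
    induction p using TensorProduct.induction_on with
    | zero => simp only [zero_tmul, _root_.map_zero, zero_mul]
    | tmul h₁ h₂ =>
      induction q using TensorProduct.induction_on with
      | zero => simp only [tmul_zero, _root_.map_zero, mul_zero]
      | tmul a₁ a₂ =>
        simp only [tensorTensorTensorComm_tmul, TensorProduct.map_tmul,
          Algebra.TensorProduct.tmul_mul_tmul, zetaF_apply, LinearEquiv.coe_coe]
        rfl
      | add q₁ q₂ hq₁ hq₂ => simp only [tmul_add, _root_.map_add, mul_add, hq₁, hq₂]
    | add p₁ p₂ hp₁ hp₂ => simp only [add_tmul, _root_.map_add, add_mul, hp₁, hp₂]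
  induction t using TensorProduct.induction_on with
  | zero => simp
  | tmul h a =>
    rw [zetaF_apply, xi_symm_comul jA jH ξ hξ]
    simp only [TensorProduct.comul_tmul, TensorProduct.AlgebraTensorModule.tensorTensorTensorComm_eq, LinearMap.coe_comp,
      LinearEquiv.coe_coe, Function.comp_apply, TensorProduct.map_tmul]
    rw [Bialgebra.comul_mul, key]
    have hA' : TensorProduct.map jA.toLinearMap jA.toLinearMap ∘ₗ Coalgebra.comul
        = Coalgebra.comul ∘ₗ jA.toLinearMap := CoalgHomClass.map_comp_comul jA
    have hH' : TensorProduct.map jH.toLinearMap jH.toLinearMap ∘ₗ Coalgebra.comul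
        = Coalgebra.comul ∘ₗ jH.toLinearMap := CoalgHomClass.map_comp_comul jH
    have hA := LinearMap.congr_fun hA' a
    have hH := LinearMap.congr_fun hH' h
    simp only [LinearMap.coe_comp, Function.comp_apply] at hA hH
    have hA2 : (TensorProduct.map jA.toLinearMap jA.toLinearMap) (Coalgebra.comul a)
        = Coalgebra.comul (R := k) (jA a) := hA
    have hH2 : (TensorProduct.map jH.toLinearMap jH.toLinearMap) (Coalgebra.comul h)
        = Coalgebra.comul (R := k) (jH h) := hH
    rw [hA2, hH2]
  | add t₁ t₂ h₁ h₂ => simp only [_root_.map_add, h₁, h₂]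

theorem map_pq_comul (w : A ⊗[k] H) :
    TensorProduct.map
      ((TensorProduct.rid k A).toLinearMap ∘ₗ
        TensorProduct.map LinearMap.id Coalgebra.counit)
      ((TensorProduct.lid k H).toLinearMap ∘ₗ
        TensorProduct.map Coalgebra.counit LinearMap.id)
      (Coalgebra.comul (R := k) w) = w := by
  have key : ∀ (u : A ⊗[k] A) (v : H ⊗[k] H),
      TensorProduct.map
        ((TensorProduct.rid k A).toLinearMap ∘ₗ
          TensorProduct.map LinearMap.id Coalgebra.counit)
        ((TensorProduct.lid k H).toLinearMap ∘ₗ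
          TensorProduct.map Coalgebra.counit LinearMap.id)
        (TensorProduct.tensorTensorTensorComm k A A H H (u ⊗ₜ v))
      = (TensorProduct.rid k A)
          ((TensorProduct.map LinearMap.id Coalgebra.counit) u) ⊗ₜ[k]
        (TensorProduct.lid k H)
          ((TensorProduct.map Coalgebra.counit LinearMap.id) v) := by
    intro u v
    induction u using TensorProduct.induction_on with
    | zero => simp only [zero_tmul, _root_.map_zero]
    | tmul a₁ a₂ =>
      induction v using TensorProduct.induction_on with
      | zero => simp only [tmul_zero, _root_.map_zero]
      | tmul h₁ h₂ =>
        simp only [tensorTensorTensorComm_tmul, TensorProduct.map_tmul,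
          LinearMap.coe_comp, Function.comp_apply, LinearEquiv.coe_coe,
          TensorProduct.rid_tmul, TensorProduct.lid_tmul, LinearMap.id_coe, id_eq]
        rw [← TensorProduct.smul_tmul', ← TensorProduct.smul_tmul',
          TensorProduct.tmul_smul, TensorProduct.tmul_smul, smul_smul, smul_smul,
          mul_comm (Coalgebra.counit (R := k) h₁) (Coalgebra.counit (R := k) a₂)]
      | add v₁ v₂ hv₁ hv₂ => simp only [tmul_add, _root_.map_add, hv₁, hv₂]
    | add u₁ u₂ hu₁ hu₂ => simp only [add_tmul, _root_.map_add, hu₁, hu₂]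
  induction w using TensorProduct.induction_on with
  | zero => simp
  | tmul a h =>
    simp only [TensorProduct.comul_tmul, TensorProduct.AlgebraTensorModule.tensorTensorTensorComm_eq, LinearMap.coe_comp,
      LinearEquiv.coe_coe, Function.comp_apply, TensorProduct.map_tmul]
    rw [key]
    have h1 : (TensorProduct.map LinearMap.id Coalgebra.counit)
        (Coalgebra.comul (R := k) a) = a ⊗ₜ[k] (1 : k) :=
      Coalgebra.lTensor_counit_comul a
    have h2 : (TensorProduct.map Coalgebra.counit LinearMap.id)
        (Coalgebra.comul (R := k) h) = (1 : k) ⊗ₜ[k] h :=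
      Coalgebra.rTensor_counit_comul h
    rw [h1, h2]
    simp
  | add w₁ w₂ h₁ h₂ => simp only [_root_.map_add, h₁, h₂]

theorem zetaAB_eq (jA : A →ₐc[k] X) (jH : H →ₐc[k] X) (ξ : (A ⊗[k] H) ≃ₗ[k] X)
    (hξ : ∀ (a : A) (h : H), ξ (a ⊗ₜ[k] h) = jA a * jH h) :
    zetaAB jA jH ξ = zetaF jA jH ξ := by
  apply LinearMap.ext
  intro t
  have : zetaAB jA jH ξ t
      = TensorProduct.map
          ((TensorProduct.rid k A).toLinearMap ∘ₗ
            TensorProduct.map LinearMap.id Coalgebra.counit)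
          ((TensorProduct.lid k H).toLinearMap ∘ₗ
            TensorProduct.map Coalgebra.counit LinearMap.id)
          (TensorProduct.map (zetaF jA jH ξ) (zetaF jA jH ξ)
            (Coalgebra.comul (R := k) t)) := by
    have e1 : alphaF jA jH ξ
        = ((TensorProduct.rid k A).toLinearMap ∘ₗ
            TensorProduct.map LinearMap.id Coalgebra.counit) ∘ₗ zetaF jA jH ξ := rfl
    have e2 : betaF jA jH ξ
        = ((TensorProduct.lid k H).toLinearMap ∘ₗ
            TensorProduct.map Coalgebra.counit LinearMap.id) ∘ₗ zetaF jA jH ξ := rfl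
    rw [zetaAB, e1, e2, TensorProduct.map_comp]
    rfl
  rw [this, ← zeta_comul jA jH ξ hξ, map_pq_comul]

theorem mD_apply (jA : A →ₐc[k] X) (jH : H →ₐc[k] X) (ξ : (A ⊗[k] H) ≃ₗ[k] X)
    (hξ : ∀ (a : A) (h : H), ξ (a ⊗ₜ[k] h) = jA a * jH h) (u v : A ⊗[k] H) :
    mD jA jH ξ (u ⊗ₜ[k] v) = ξ.symm (ξ u * ξ v) := by
  induction u using TensorProduct.induction_on with
  | zero => simp
  | tmul a h =>
    induction v using TensorProduct.induction_on with
    | zero => simp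
    | tmul a' h' =>
      have key : ∀ t : A ⊗[k] H,
          TensorProduct.map (LinearMap.mul' k A) LinearMap.id
            ((TensorProduct.assoc k A A H).symm (a ⊗ₜ[k]
              (TensorProduct.map LinearMap.id (LinearMap.mul' k H)
                ((TensorProduct.assoc k A H H) (t ⊗ₜ[k] h')))))
          = ξ.symm (jA a * ξ t * jH h') := by
        intro t
        induction t using TensorProduct.induction_on with
        | zero => simp
        | tmul b g =>
          simp only [TensorProduct.assoc_tmul, TensorProduct.map_tmul,
            TensorProduct.assoc_symm_tmul, LinearMap.mul'_apply, LinearMap.id_coe, id_eq]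
          rw [hξ, ← mul_assoc, mul_assoc (jA a) (jA b), ← mul_assoc (jA a)]
          rw [← _root_.map_mul jA, mul_assoc, ← _root_.map_mul jH, ← hξ,
            ξ.symm_apply_apply]
        | add t₁ t₂ h₁ h₂ =>
          simp only [add_tmul, tmul_add, _root_.map_add, h₁, h₂, add_mul, mul_add]
      have expand : mD jA jH ξ ((a ⊗ₜ[k] h) ⊗ₜ[k] (a' ⊗ₜ[k] h'))
          = TensorProduct.map (LinearMap.mul' k A) LinearMap.id
            ((TensorProduct.assoc k A A H).symm (a ⊗ₜ[k]
              (TensorProduct.map LinearMap.id (LinearMap.mul' k H)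
                ((TensorProduct.assoc k A H H)
                  ((zetaF jA jH ξ (h ⊗ₜ[k] a')) ⊗ₜ[k] h'))))) := by
        simp only [mD, LinearMap.coe_comp, Function.comp_apply, LinearEquiv.coe_coe,
          TensorProduct.assoc_tmul, TensorProduct.assoc_symm_tmul,
          TensorProduct.map_tmul, LinearMap.id_coe, id_eq, zetaAB_eq jA jH ξ hξ]
      rw [expand, key, xi_zetaF, hξ, hξ, ← mul_assoc, ← mul_assoc]
    | add v₁ v₂ h₁ h₂ => simp only [tmul_add, _root_.map_add, h₁, h₂, mul_add]
  | add u₁ u₂ h₁ h₂ =>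
    simp only [add_tmul, _root_.map_add, h₁, h₂, add_mul]

/-- the double cross product A ⋈ H is a bialgebra: with the
tensor-product coalgebra structure on A ⊗ H, Δ and ε are multiplicative with
respect to m_D, and Δ(1 ⊗ 1) = (1 ⊗ 1) ⊗ (1 ⊗ 1). -/
theorem doubleCrossProduct_bialgebra (jA : A →ₐc[k] X) (jH : H →ₐc[k] X)
    (ξ : (A ⊗[k] H) ≃ₗ[k] X)
    (hξ : ∀ (a : A) (h : H), ξ (a ⊗ₜ[k] h) = jA a * jH h) :
    (∀ u v : A ⊗[k] H,
      Coalgebra.comul (R := k) (mD jA jH ξ (u ⊗ₜ[k] v))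
        = TensorProduct.map (mD jA jH ξ) (mD jA jH ξ)
            (Coalgebra.comul (R := k) (u ⊗ₜ[k] v)) ∧
      Coalgebra.counit (R := k) (mD jA jH ξ (u ⊗ₜ[k] v))
        = Coalgebra.counit (R := k) u * Coalgebra.counit (R := k) v) ∧
    Coalgebra.comul (R := k) ((1 : A) ⊗ₜ[k] (1 : H))
      = ((1 : A) ⊗ₜ[k] (1 : H)) ⊗ₜ[k] ((1 : A) ⊗ₜ[k] (1 : H)) := by
  have mDap := mD_apply jA jH ξ hξ
  refine ⟨fun u v => ⟨?_, ?_⟩, ?_⟩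
  · -- comul multiplicative
    have key : ∀ (U V : (A ⊗[k] H) ⊗[k] (A ⊗[k] H)),
        TensorProduct.map (mD jA jH ξ) (mD jA jH ξ)
          (TensorProduct.tensorTensorTensorComm k (A ⊗[k] H) (A ⊗[k] H)
            (A ⊗[k] H) (A ⊗[k] H) (U ⊗ₜ V))
        = TensorProduct.map ξ.symm.toLinearMap ξ.symm.toLinearMap
            ((TensorProduct.map ξ.toLinearMap ξ.toLinearMap U)
              * (TensorProduct.map ξ.toLinearMap ξ.toLinearMap V)) := by
      intro U V
      induction U using TensorProduct.induction_on with
      | zero => simp only [zero_tmul, _root_.map_zero, zero_mul]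
      | tmul u₁ u₂ =>
        induction V using TensorProduct.induction_on with
        | zero => simp only [tmul_zero, _root_.map_zero, mul_zero]
        | tmul v₁ v₂ =>
          simp only [tensorTensorTensorComm_tmul, TensorProduct.map_tmul,
            Algebra.TensorProduct.tmul_mul_tmul, LinearEquiv.coe_coe, mDap]
        | add V₁ V₂ hV₁ hV₂ => simp only [tmul_add, _root_.map_add, mul_add, hV₁, hV₂]
      | add U₁ U₂ hU₁ hU₂ => simp only [add_tmul, _root_.map_add, add_mul, hU₁, hU₂]
    rw [mDap, xi_symm_comul jA jH ξ hξ, Bialgebra.comul_mul,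
      xi_comul jA jH ξ hξ u, xi_comul jA jH ξ hξ v]
    simp only [TensorProduct.comul_tmul, TensorProduct.AlgebraTensorModule.tensorTensorTensorComm_eq, LinearMap.coe_comp,
      LinearEquiv.coe_coe, Function.comp_apply, TensorProduct.map_tmul]
    rw [key]
  · -- counit multiplicative
    rw [mDap, xi_symm_counit jA jH ξ hξ, Bialgebra.counit_mul,
      xi_counit jA jH ξ hξ u, xi_counit jA jH ξ hξ v]
  · -- comul of the unit
    simp only [TensorProduct.comul_tmul, TensorProduct.AlgebraTensorModule.tensorTensorTensorComm_eq, LinearMap.coe_comp,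
      LinearEquiv.coe_coe, Function.comp_apply, TensorProduct.map_tmul,
      Bialgebra.comul_one, Algebra.TensorProduct.one_def, tensorTensorTensorComm_tmul]
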